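/- arXiv:0902.3831 — 2 statements merged into one kernel-verified Lean document; each statement's English description precedes it below -/
import Mathlib

section
/- Let s ∈ B_n and t ∈ B. If s ⪯ t ⪯ s + ⟨1⟩, then t = s or t = s + ⟨1⟩. Moreover τ(s + ⟨1⟩) − τ(s) = λ(n). -/
/-- The `j`-th entry (1-indexed) of a finite sequence of positive naturals,
viewed as a natural number. Only used for `1 ≤ j ≤ s.length`. -/
def nthSeq (s : List ℕ+) (j : ℕ) : ℕ := ↑(s.getD (j - 1) 1)

/-- The linear order `⪯` on finite sequences of positive natural numbers:
`s ⪯ t` iff either (a) there is an index `j ≤ min (ℓ s) (ℓ t)` which is the first index where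
`s` and `t` differ, and there `s j < t j`, or (b) `ℓ s ≤ ℓ t` and `t` extends `s`. -/
def sle (s t : List ℕ+) : Prop :=
  (∃ j, 1 ≤ j ∧ j ≤ min s.length t.length ∧
     (∀ i, 1 ≤ i → i < j → nthSeq s i = nthSeq t i) ∧ nthSeq s j < nthSeq t j) ∨
  (s.length ≤ t.length ∧ ∀ j, 1 ≤ j → j ≤ s.length → nthSeq s j = nthSeq t j)

/-- The strict version `≺` of the order `⪯`. -/
def slt (s t : List ℕ+) : Prop := sle s t ∧ s ≠ t

/-- The set `B` of nonempty sequences `s` with `s i ≤ i` for all `1 ≤ i ≤ ℓ s`. -/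
def BSet : Set (List ℕ+) := {s | 1 ≤ s.length ∧ ∀ i, 1 ≤ i → i ≤ s.length → nthSeq s i ≤ i}

/-- `λ n = 1 / (2^n n!)`. -/
noncomputable def lam (n : ℕ) : ℝ := 1 / ((2 : ℝ) ^ n * (n.factorial : ℝ))

/-- `τ s = Σ_{t ∈ B, t ≺ s} λ (ℓ t)`. -/
noncomputable def tau (s : List ℕ+) : ℝ :=
  ∑' t : {t : List ℕ+ // t ∈ BSet ∧ slt t s}, lam t.1.length

/-! ### Auxiliary lemmas -/

lemma nthSeq_eq (s : List ℕ+) (j : ℕ) (h1 : 1 ≤ j) (h2 : j ≤ s.length) :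
    nthSeq s j = ((s[j-1]'(by omega) : ℕ+) : ℕ) := by
  simp [nthSeq, List.getD_eq_getElem?_getD, List.getElem?_eq_getElem (show j - 1 < s.length by omega)]

lemma one_le_nthSeq (s : List ℕ+) (j : ℕ) (h1 : 1 ≤ j) (h2 : j ≤ s.length) :
    1 ≤ nthSeq s j := by
  rw [nthSeq_eq s j h1 h2]
  exact (s[j-1]'(by omega)).one_le

lemma seq_ext {s t : List ℕ+} (hl : s.length = t.length)
    (h : ∀ j, 1 ≤ j → j ≤ s.length → nthSeq s j = nthSeq t j) : s = t := by
  apply List.ext_getElem hl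
  intro i hi1 hi2
  have := h (i+1) (by omega) (by omega)
  rw [nthSeq_eq s _ (by omega) (by omega), nthSeq_eq t _ (by omega) (by omega)] at this
  simp only [Nat.add_sub_cancel] at this
  exact PNat.coe_injective this

lemma nthSeq_append (s : List ℕ+) (a : ℕ+) (j : ℕ) (h1 : 1 ≤ j) (h2 : j ≤ s.length) :
    nthSeq (s ++ [a]) j = nthSeq s j := by
  rw [nthSeq_eq _ j h1 (by simp; omega), nthSeq_eq s j h1 h2]
  congr 1
  exact List.getElem_append_left (by omega)

lemma nthSeq_append_last (s : List ℕ+) (a : ℕ+) :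
    nthSeq (s ++ [a]) (s.length + 1) = a := by
  rw [nthSeq_eq _ _ (by omega) (by simp)]
  simp

lemma sle_total (s t : List ℕ+) : sle s t ∨ sle t s := by
  classical
  by_cases h : ∃ j, (1 ≤ j ∧ j ≤ min s.length t.length) ∧ nthSeq s j ≠ nthSeq t j
  · obtain ⟨⟨hj1, hj2⟩, hne⟩ := Nat.find_spec h
    set j0 := Nat.find h with hj0
    have hagree : ∀ i, 1 ≤ i → i < j0 → nthSeq s i = nthSeq t i := by
      intro i hi1 hi2
      by_contra hne'
      exact Nat.find_min h hi2 ⟨⟨hi1, le_trans (le_of_lt hi2) hj2⟩, hne'⟩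
    rcases lt_or_gt_of_ne hne with hlt | hlt
    · exact Or.inl (Or.inl ⟨j0, hj1, hj2, hagree, hlt⟩)
    · refine Or.inr (Or.inl ⟨j0, hj1, by omega, fun i a b => (hagree i a b).symm, hlt⟩)
  · push_neg at h
    rcases le_total s.length t.length with hl | hl
    · exact Or.inl (Or.inr ⟨hl, fun j a b => h j ⟨a, by omega⟩⟩)
    · exact Or.inr (Or.inr ⟨hl, fun j a b => (h j ⟨a, by omega⟩).symm⟩)

lemma not_sle_append_self (s : List ℕ+) (a : ℕ+) : ¬ sle (s ++ [a]) s := by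
  rintro (⟨j, hj1, hj2, _, hlt⟩ | ⟨hlen, _⟩)
  · have hjs : j ≤ s.length := by simp at hj2; omega
    rw [nthSeq_append s a j hj1 hjs] at hlt
    omega
  · simp at hlen

lemma slt_append_one (s : List ℕ+) : slt s (s ++ [1]) := by
  constructor
  · exact Or.inr ⟨by simp, fun j h1 h2 => (nthSeq_append s 1 j h1 h2).symm⟩
  · intro h
    apply_fun List.length at h
    simp at h

lemma sle_append_of_sle {s t : List ℕ+} {a : ℕ+} (h : sle t s) : sle t (s ++ [a]) := by
  rcases h with ⟨j, h1, h2, hag, hlt⟩ | ⟨hlen, hag⟩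
  · have hjs : j ≤ s.length := le_trans h2 (min_le_right _ _)
    refine Or.inl ⟨j, h1, by simp only [List.length_append, List.length_cons, List.length_nil]; omega, ?_, ?_⟩
    · intro i hi1 hi2
      rw [nthSeq_append s a i hi1 (by omega)]
      exact hag i hi1 hi2
    · rw [nthSeq_append s a j h1 hjs]
      exact hlt
  · refine Or.inr ⟨by simp only [List.length_append, List.length_cons, List.length_nil]; omega, fun j h1 h2 => ?_⟩
    rw [hag j h1 h2, nthSeq_append s a j h1 (by omega)]

lemma between_aux (s t : List ℕ+) (ht : t ∈ BSet) (h1 : sle s t) (h2 : sle t (s ++ [1])) :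
    t = s ∨ t = s ++ [1] := by
  rcases h1 with ⟨j, hj1, hjm, hag, hlt⟩ | ⟨hlen, hag⟩
  · exfalso
    have hjs : j ≤ s.length := le_trans hjm (min_le_left _ _)
    have hjt : j ≤ t.length := le_trans hjm (min_le_right _ _)
    rcases h2 with ⟨j', hj'1, hj'm, hag', hlt'⟩ | ⟨hlen', hag'⟩
    · rcases lt_trichotomy j j' with h | h | h
      · have := hag' j hj1 h
        rw [nthSeq_append s 1 j hj1 hjs] at this
        omega
      · subst h
        rw [nthSeq_append s 1 j hj1 hjs] at hlt'
        omega
      · have heq := hag j' hj'1 h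
        rw [nthSeq_append s 1 j' hj'1 (by omega)] at hlt'
        omega
    · have := hag' j hj1 hjt
      rw [nthSeq_append s 1 j hj1 hjs] at this
      omega
  · rcases h2 with ⟨j, hj1, hjm, hag', hlt'⟩ | ⟨hlen', hag'⟩
    · exfalso
      have hjt : j ≤ t.length := le_trans hjm (min_le_left _ _)
      have hjs1 : j ≤ s.length + 1 := by
        have := le_trans hjm (min_le_right _ _)
        simpa using this
      by_cases hc : j ≤ s.length
      · have heq := hag j hj1 hc
        rw [nthSeq_append s 1 j hj1 hc] at hlt'
        omega
      · have hj : j = s.length + 1 := by omega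
        subst hj
        have h1t := one_le_nthSeq t _ hj1 hjt
        rw [nthSeq_append_last s 1] at hlt'
        simp only [PNat.one_coe] at hlt'
        omega
    · have hlen'' : t.length ≤ s.length + 1 := by simpa using hlen'
      by_cases hc : t.length = s.length
      · exact Or.inl (seq_ext hc.symm (fun j a b => hag j a b)).symm
      · refine Or.inr (seq_ext ?_ (fun j a b => hag' j a b))
        simp
        omega

lemma slt_append_iff (s : List ℕ+) (hs : s ∈ BSet) (t : List ℕ+) (ht : t ∈ BSet) :
    slt t (s ++ [1]) ↔ slt t s ∨ t = s := by
  constructor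
  · rintro ⟨hle, hne⟩
    rcases sle_total s t with h | h
    · rcases between_aux s t ht h hle with h' | h'
      · exact Or.inr h'
      · exact absurd h' hne
    · by_cases he : t = s
      · exact Or.inr he
      · exact Or.inl ⟨h, he⟩
  · rintro (⟨hle, hne⟩ | rfl)
    · refine ⟨sle_append_of_sle hle, ?_⟩
      rintro rfl
      exact not_sle_append_self s 1 hle
    · exact slt_append_one t

/-- The embedding of a `B`-with-constraints subtype into a sigma type of finite fibers. -/
noncomputable def embB (s : List ℕ+) (t : {t : List ℕ+ // t ∈ BSet ∧ slt t s}) :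
    Σ n : ℕ, ∀ i : Fin n, Fin (i.1 + 1) :=
  ⟨t.1.length, fun i => ⟨(t.1[i.1]'(i.2) : ℕ+) - 1, by
    have hb := t.2.1.2 (i.1 + 1) (by omega) (by omega)
    rw [nthSeq_eq t.1 (i.1+1) (by omega) (by omega)] at hb
    simp only [Nat.add_sub_cancel] at hb
    have h1 := (t.1[i.1]'(i.2)).one_le
    omega⟩⟩

lemma embB_injective (s : List ℕ+) : Function.Injective (embB s) := by
  rintro ⟨a, ha⟩ ⟨b, hb⟩ h
  have hfst : a.length = b.length := congrArg Sigma.fst h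
  ext1
  apply List.ext_getElem hfst
  intro i hi1 hi2
  have hval := congrArg (fun p : (Σ n : ℕ, ∀ i : Fin n, Fin (i.1 + 1)) =>
    if hlt : i < p.1 then (p.2 ⟨i, hlt⟩ : ℕ) else 0) h
  have h1a : 0 < ((a[i]'hi1 : ℕ+) : ℕ) := (a[i]'hi1).pos
  have h1b : 0 < ((b[i]'hi2 : ℕ+) : ℕ) := (b[i]'hi2).pos
  rw [dif_pos (show i < (embB s ⟨a, ha⟩).1 from hi1), dif_pos (show i < (embB s ⟨b, hb⟩).1 from hi2)] at hval
  dsimp only [embB] at hval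
  have hval2 : ((a[i]'hi1 : ℕ+) : ℕ) = ((b[i]'hi2 : ℕ+) : ℕ) := by omega
  exact PNat.coe_injective hval2

lemma summable_gB : Summable (fun p : Σ n : ℕ, ∀ i : Fin n, Fin (i.1 + 1) => lam p.1) := by
  have hpos : ∀ p : Σ n : ℕ, ∀ i : Fin n, Fin (i.1 + 1), 0 ≤ lam p.1 := by
    intro p
    unfold lam
    positivity
  apply (summable_sigma_of_nonneg hpos).2
  constructor
  · intro n
    exact Summable.of_finite
  · have key : ∀ n : ℕ, (∑' _ : (∀ i : Fin n, Fin (i.1 + 1)), lam n) = (1/2 : ℝ)^n := by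
      intro n
      rw [tsum_fintype, Finset.sum_const, Finset.card_univ]
      have hcard : Fintype.card (∀ i : Fin n, Fin (i.1 + 1)) = n.factorial := by
        rw [Fintype.card_pi]
        simp only [Fintype.card_fin]
        rw [Fin.prod_univ_eq_prod_range (fun i => i + 1) n]
        exact Finset.prod_range_add_one_eq_factorial n
      rw [hcard, nsmul_eq_mul]
      have hf : (n.factorial : ℝ) ≠ 0 := by exact_mod_cast n.factorial_ne_zero
      have h2 : (2:ℝ)^n ≠ 0 := by positivity
      rw [lam, one_div_pow, mul_one_div, mul_comm ((2:ℝ)^n), ← div_div, div_self hf]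
    apply Summable.congr (f := fun n : ℕ => (1/2 : ℝ)^n)
    · exact summable_geometric_of_lt_one (by norm_num) (by norm_num)
    · exact fun n => (key n).symm

set_option maxHeartbeats 1000000 in
lemma summable_tau (s : List ℕ+) :
    Summable (fun t : {t : List ℕ+ // t ∈ BSet ∧ slt t s} => lam t.1.length) := by
  have h := summable_gB.comp_injective (embB_injective s)
  exact h.congr (fun t => rfl)

lemma tsum_set_eq {α : Type*} (f : α → ℝ) {X Y : Set α} (h : X = Y) :
    ∑' x : X, f x = ∑' x : Y, f x := by subst h; rfl

/-- Let `s ∈ B_n` and `t ∈ B`. If `s ⪯ t ⪯ s + ⟨1⟩`, then `t = s` or `t = s + ⟨1⟩`.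
Moreover `τ (s + ⟨1⟩) - τ s = λ n`. -/
theorem between_append_one (n : ℕ) (s : List ℕ+) (hs : s ∈ BSet) (hlen : s.length = n) :
    (∀ t ∈ BSet, sle s t → sle t (s ++ [1]) → t = s ∨ t = s ++ [1]) ∧
    tau (s ++ [1]) - tau s = lam n := by
  constructor
  · intro t ht h1 h2
    exact between_aux s t ht h1 h2
  · have hset : {t : List ℕ+ | t ∈ BSet ∧ slt t (s ++ [1])}
        = {s} ∪ {t : List ℕ+ | t ∈ BSet ∧ slt t s} := by
      ext t
      simp only [Set.mem_setOf_eq, Set.mem_union, Set.mem_singleton_iff]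
      constructor
      · rintro ⟨ht, hlt⟩
        rcases (slt_append_iff s hs t ht).1 hlt with h | h
        · exact Or.inr ⟨ht, h⟩
        · exact Or.inl h
      · rintro (rfl | ⟨ht, hlt⟩)
        · exact ⟨hs, slt_append_one t⟩
        · exact ⟨ht, (slt_append_iff s hs t ht).2 (Or.inl hlt)⟩
    have hdisj : Disjoint ({s} : Set (List ℕ+)) {t : List ℕ+ | t ∈ BSet ∧ slt t s} := by
      rw [Set.disjoint_singleton_left]
      rintro ⟨-, -, hne⟩
      exact hne rfl
    have e1 : tau (s ++ [1])
        = ∑' t : ↥(({s} : Set (List ℕ+)) ∪ {t : List ℕ+ | t ∈ BSet ∧ slt t s}),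
            (fun l : List ℕ+ => lam l.length) ↑t :=
      tsum_set_eq (fun l : List ℕ+ => lam l.length) hset
    have hsum1 : Summable ((fun l : List ℕ+ => lam l.length)
        ∘ (Subtype.val : ({s} : Set (List ℕ+)) → List ℕ+)) := by
      have : Finite (({s} : Set (List ℕ+))) := (Set.finite_singleton s).to_subtype
      exact Summable.of_finite
    have hsum2 : Summable ((fun l : List ℕ+ => lam l.length)
        ∘ (Subtype.val : ({t : List ℕ+ | t ∈ BSet ∧ slt t s}) → List ℕ+)) :=
      summable_tau s
    rw [e1, Summable.tsum_union_disjoint hdisj hsum1 hsum2]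
    rw [show (∑' (x : ↑({s} : Set (List ℕ+))), (fun l : List ℕ+ => lam l.length) (↑x : List ℕ+))
        = lam s.length from tsum_singleton s (fun l : List ℕ+ => lam l.length)]
    have : (∑' t : ↥{t : List ℕ+ | t ∈ BSet ∧ slt t s},
        (fun l : List ℕ+ => lam l.length) ↑t) = tau s := rfl
    rw [this, hlen]
    ring
end

section
/- Let s, s′ ∈ B_n and let s″ ∈ S be such that the concatenations s + s″ and s′ + s″ belong to B. Then τ(s + s″) − τ(s′ + s″) = τ(s) − τ(s′). -/
/-! ### Auxiliary material -/

/-- Abbreviation for the lexicographic strict order on lists. -/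
abbrev LexLt (s t : List ℕ+) : Prop := List.Lex (· < ·) s t

lemma nthSeq_cons_one (a : ℕ+) (s : List ℕ+) : nthSeq (a :: s) 1 = a := rfl

lemma nthSeq_cons_succ (a : ℕ+) (s : List ℕ+) (j : ℕ) (hj : 1 ≤ j) :
    nthSeq (a :: s) (j + 1) = nthSeq s j := by
  unfold nthSeq
  congr 1
  have h : j + 1 - 1 = (j - 1) + 1 := by omega
  rw [h, List.getD_cons_succ]

lemma sle_cons_iff (a b : ℕ+) (s t : List ℕ+) :
    sle (a :: s) (b :: t) ↔ ((a : ℕ) < b ∨ ((a : ℕ) = b ∧ sle s t)) := by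
  constructor
  · rintro (⟨j, hj1, hjmin, hfirst, hlt⟩ | ⟨hlen, hall⟩)
    · rcases eq_or_lt_of_le hj1 with rfl | hj2
      · left; exact hlt
      · right
        have hab : (a : ℕ) = b := hfirst 1 le_rfl hj2
        refine ⟨hab, Or.inl ⟨j - 1, by omega, ?_, ?_, ?_⟩⟩
        · simp only [List.length_cons] at hjmin; omega
        · intro i hi1 hi2
          have := hfirst (i + 1) (by omega) (by omega)
          rwa [nthSeq_cons_succ a s i hi1, nthSeq_cons_succ b t i hi1] at this
        · have hj : j = (j - 1) + 1 := by omega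
          rw [hj, nthSeq_cons_succ a s _ (by omega), nthSeq_cons_succ b t _ (by omega)] at hlt
          exact hlt
    · right
      refine ⟨hall 1 le_rfl (by simp), Or.inr ⟨?_, ?_⟩⟩
      · simp only [List.length_cons] at hlen; omega
      · intro j hj1 hj2
        have := hall (j + 1) (by omega) (by simp only [List.length_cons]; omega)
        rwa [nthSeq_cons_succ a s j hj1, nthSeq_cons_succ b t j hj1] at this
  · rintro (hab | ⟨hab, (⟨j, hj1, hjmin, hfirst, hlt⟩ | ⟨hlen, hall⟩)⟩)
    · exact Or.inl ⟨1, le_rfl, by simp only [List.length_cons]; omega, by omega, hab⟩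
    · refine Or.inl ⟨j + 1, by omega, by simp only [List.length_cons]; omega, ?_, ?_⟩
      · intro i hi1 hi2
        rcases eq_or_lt_of_le hi1 with rfl | hi2'
        · exact hab
        · have hi : i = (i - 1) + 1 := by omega
          rw [hi, nthSeq_cons_succ a s _ (by omega), nthSeq_cons_succ b t _ (by omega)]
          exact hfirst (i - 1) (by omega) (by omega)
      · rw [nthSeq_cons_succ a s j hj1, nthSeq_cons_succ b t j hj1]; exact hlt
    · refine Or.inr ⟨by simp only [List.length_cons]; omega, ?_⟩
      intro j hj1 hj2
      rcases eq_or_lt_of_le hj1 with rfl | hj2'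
      · exact hab
      · have hj : j = (j - 1) + 1 := by omega
        rw [hj, nthSeq_cons_succ a s _ (by omega), nthSeq_cons_succ b t _ (by omega)]
        refine hall (j - 1) (by omega) ?_
        simp only [List.length_cons] at hj2; omega

lemma sle_iff : ∀ s t : List ℕ+, sle s t ↔ (s = t ∨ LexLt s t)
  | [], t => by
    constructor
    · intro _
      cases t with
      | nil => exact Or.inl rfl
      | cons b t => exact Or.inr List.Lex.nil
    · intro _
      right
      refine ⟨by simp, fun j hj hj0 => ?_⟩
      simp only [List.length_nil] at hj0
      omega
  | a :: s, [] => by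
    constructor
    · rintro (⟨j, hj1, hjmin, -, -⟩ | ⟨hlen, -⟩)
      · simp at hjmin; omega
      · simp at hlen
    · rintro (h | h)
      · exact absurd h (by simp)
      · exact absurd h List.not_lex_nil
  | a :: s, b :: t => by
    rw [sle_cons_iff]
    constructor
    · rintro (hab | ⟨hab, hst⟩)
      · exact Or.inr (List.Lex.rel (by exact_mod_cast hab))
      · have hab' : a = b := by exact_mod_cast hab
        subst hab'
        rcases (sle_iff s t).mp hst with rfl | h
        · exact Or.inl rfl
        · exact Or.inr (List.Lex.cons h)
    · rintro (heq | hlex)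
      · obtain ⟨rfl, rfl⟩ : a = b ∧ s = t := by simpa using heq
        exact Or.inr ⟨rfl, (sle_iff _ _).mpr (Or.inl rfl)⟩
      · cases hlex with
        | rel h => exact Or.inl (by exact_mod_cast h)
        | cons h => exact Or.inr ⟨rfl, (sle_iff s t).mpr (Or.inr h)⟩

lemma not_lex_append_self : ∀ (s u : List ℕ+), ¬ LexLt (s ++ u) s
  | [], u, h => List.not_lex_nil h
  | a :: s₀, u, h => not_lex_append_self s₀ u (List.lex_cons_iff.mp h)

lemma not_lex_self (s : List ℕ+) : ¬ LexLt s s := by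
  simpa using not_lex_append_self s []

lemma slt_iff_lex (s t : List ℕ+) : slt s t ↔ LexLt s t := by
  constructor
  · rintro ⟨h, hne⟩
    rcases (sle_iff s t).mp h with rfl | h'
    · exact absurd rfl hne
    · exact h'
  · intro h
    refine ⟨(sle_iff s t).mpr (Or.inr h), ?_⟩
    rintro rfl
    exact not_lex_self s h

lemma lex_self_append (s : List ℕ+) {w : List ℕ+} (hw : w ≠ []) : LexLt s (s ++ w) := by
  induction s with
  | nil =>
    cases w with
    | nil => exact absurd rfl hw
    | cons x xs => exact List.Lex.nil
  | cons a s ih => exact List.Lex.cons ih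

lemma lex_sandwich : ∀ (s t w : List ℕ+), ¬ LexLt t s → LexLt t (s ++ w) →
    ∃ u, t = s ++ u ∧ LexLt u w
  | [], t, w, _, h => ⟨t, rfl, h⟩
  | a :: s₀, [], w, hns, _ => absurd List.Lex.nil hns
  | a :: s₀, b :: t₀, w, hns, h => by
    cases h with
    | rel hba => exact absurd (List.Lex.rel hba) hns
    | cons h' =>
      obtain ⟨u, rfl, hu⟩ := lex_sandwich s₀ t₀ w (fun hl => hns (List.Lex.cons hl)) h'
      exact ⟨u, rfl, hu⟩

lemma nthSeq_append_left (s u : List ℕ+) (j : ℕ) (h1 : 1 ≤ j) (h2 : j ≤ s.length) :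
    nthSeq (s ++ u) j = nthSeq s j := by
  unfold nthSeq
  rw [List.getD_append _ _ _ _ (by omega)]

lemma nthSeq_append_right (s u : List ℕ+) (i : ℕ) (h1 : 1 ≤ i) :
    nthSeq (s ++ u) (s.length + i) = nthSeq u i := by
  unfold nthSeq
  rw [List.getD_append_right _ _ _ _ (by omega)]
  congr 2
  omega

lemma mem_BSet_append {s : List ℕ+} (hs : s ∈ BSet) (u : List ℕ+) :
    (s ++ u) ∈ BSet ↔ ∀ i, 1 ≤ i → i ≤ u.length → nthSeq u i ≤ s.length + i := by
  obtain ⟨hs1, hs2⟩ := hs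
  constructor
  · rintro ⟨-, h⟩ i h1 h2
    have := h (s.length + i) (by omega) (by rw [List.length_append]; omega)
    rwa [nthSeq_append_right s u i h1] at this
  · intro h
    refine ⟨by rw [List.length_append]; omega, fun j hj1 hj2 => ?_⟩
    rw [List.length_append] at hj2
    by_cases hc : j ≤ s.length
    · rw [nthSeq_append_left s u j hj1 hc]; exact hs2 j hj1 hc
    · have hj : j = s.length + (j - s.length) := by omega
      rw [hj, nthSeq_append_right s u _ (by omega)]
      have := h (j - s.length) (by omega) (by omega)
      omega

/-! ### Summability -/

lemma lam_nonneg (n : ℕ) : 0 ≤ lam n := by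
  unfold lam
  positivity

/-- The set of elements of `B` of length `k`. -/
def BLen (k : ℕ) : Set (List ℕ+) := {t | t ∈ BSet ∧ t.length = k}

lemma BLen_injection (k : ℕ) : ∃ f : ↥(BLen k) → (∀ i : Fin k, Fin (i + 1)),
    Function.Injective f := by
  refine ⟨fun t i => ⟨(t.1.get (Fin.cast t.2.2.symm i) : ℕ) - 1, ?_⟩, ?_⟩
  · have hlen : t.1.length = k := t.2.2
    have hpos : 0 < (t.1.get (Fin.cast hlen.symm i) : ℕ) := (t.1.get _).2
    have hle := t.2.1.2 ((i : ℕ) + 1) (by omega) (by omega)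
    have hval : nthSeq t.1 ((i : ℕ) + 1) = (t.1.get (Fin.cast hlen.symm i) : ℕ) := by
      unfold nthSeq
      rw [Nat.add_sub_cancel, List.getD_eq_getElem _ _ (by omega)]
      rfl
    omega
  · rintro ⟨t, htB, htl⟩ ⟨t', ht'B, ht'l⟩ h
    ext1
    show t = t'
    refine List.ext_get (htl.trans ht'l.symm) (fun i hi1 hi2 => ?_)
    have := congr_fun h ⟨i, by omega⟩
    simp only [Fin.mk.injEq] at this
    have hp : 0 < (t.get ⟨i, hi1⟩ : ℕ) := (t.get _).2
    have hp' : 0 < (t'.get ⟨i, hi2⟩ : ℕ) := (t'.get _).2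
    have hv : (t.get ⟨i, hi1⟩ : ℕ) - 1 = (t'.get ⟨i, hi2⟩ : ℕ) - 1 := this
    have : (t.get ⟨i, hi1⟩ : ℕ) = (t'.get ⟨i, hi2⟩ : ℕ) := by omega
    exact_mod_cast this

lemma card_BLen_le (k : ℕ) : Nat.card (↥(BLen k)) ≤ k.factorial := by
  obtain ⟨f, hf⟩ := BLen_injection k
  calc Nat.card (↥(BLen k)) ≤ Nat.card (∀ i : Fin k, Fin (i + 1)) :=
        Nat.card_le_card_of_injective f hf
    _ = k.factorial := by
        rw [Nat.card_eq_fintype_card, Fintype.card_pi]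
        simp only [Fintype.card_fin]
        exact (Fin.prod_univ_eq_prod_range (fun n => n + 1) k).trans
          (Finset.prod_range_add_one_eq_factorial k)

lemma BLen_finite (k : ℕ) : Finite (↥(BLen k)) := by
  obtain ⟨f, hf⟩ := BLen_injection k
  exact Finite.of_injective f hf

lemma summable_B : Summable (fun t : ↥BSet => lam t.1.length) := by
  classical
  let e : ↥BSet ≃ Σ k : ℕ, ↥(BLen k) :=
    { toFun := fun t => ⟨t.1.length, ⟨t.1, t.2, rfl⟩⟩
      invFun := fun p => ⟨p.2.1, p.2.2.1⟩
      left_inv := fun t => rfl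
      right_inv := by rintro ⟨k, t, ht, rfl⟩; rfl }
  have hsum : Summable (fun p : Σ k : ℕ, ↥(BLen k) => lam p.1) := by
    rw [summable_sigma_of_nonneg (fun p => lam_nonneg _)]
    constructor
    · intro k
      have := BLen_finite k
      exact Summable.of_finite
    · have hfin := BLen_finite
      refine Summable.of_nonneg_of_le (fun k => ?_) (fun k => ?_)
        (summable_geometric_of_lt_one (r := 1/2) (by norm_num) (by norm_num))
      · show (0:ℝ) ≤ ∑' _ : ↥(BLen k), lam k
        rw [tsum_const]
        have := lam_nonneg k
        positivity
      · show (∑' _ : ↥(BLen k), lam k) ≤ (1/2 : ℝ) ^ k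
        rw [tsum_const, nsmul_eq_mul]
        have hb : (Nat.card (↥(BLen k)) : ℝ) ≤ (k.factorial : ℝ) := by
          exact_mod_cast card_BLen_le k
        calc (Nat.card (↥(BLen k)) : ℝ) * lam k ≤ (k.factorial : ℝ) * lam k :=
              mul_le_mul_of_nonneg_right hb (lam_nonneg k)
          _ = (1/2 : ℝ) ^ k := by
              unfold lam
              rw [div_pow, one_pow]
              have h2 : (2 : ℝ) ^ k ≠ 0 := by positivity
              have hf : (k.factorial : ℝ) ≠ 0 := Nat.cast_ne_zero.mpr k.factorial_ne_zero
              field_simp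
  have := (Equiv.summable_iff e (f := fun p : Σ k : ℕ, ↥(BLen k) => lam p.1)).mpr hsum
  exact this

lemma summable_sub {A : Set (List ℕ+)} (hA : A ⊆ BSet) :
    Summable (fun t : ↥A => lam t.1.length) := by
  have hB : Summable (BSet.indicator (fun l : List ℕ+ => lam l.length)) :=
    summable_subtype_iff_indicator.mp summable_B
  have hA' : Summable (A.indicator (fun l : List ℕ+ => lam l.length)) := by
    refine Summable.of_nonneg_of_le (fun l => ?_) (fun l => ?_) hB
    · exact Set.indicator_nonneg (fun l _ => lam_nonneg _) l
    · exact Set.indicator_le_indicator_of_subset hA (fun l => lam_nonneg _) l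
  exact summable_subtype_iff_indicator.mpr hA'

/-! ### Splitting of `tau` -/

lemma tau_eq (b : List ℕ+) :
    tau b = ∑' t : ↥{t | t ∈ BSet ∧ LexLt t b}, lam t.1.length := by
  have hset : {t : List ℕ+ | t ∈ BSet ∧ slt t b} = {t | t ∈ BSet ∧ LexLt t b} := by
    ext t; exact and_congr_right fun _ => slt_iff_lex t b
  rw [tau]
  exact tsum_congr_set_coe (fun l : List ℕ+ => lam l.length) hset

lemma tau_split {a b : List ℕ+} (hab : a = b ∨ LexLt a b) :
    tau b = tau a +
      ∑' t : ↥{t | t ∈ BSet ∧ ¬ LexLt t a ∧ LexLt t b}, lam t.1.length := by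
  rw [tau_eq a, tau_eq b]
  have hset : {t | t ∈ BSet ∧ LexLt t b} =
      {t | t ∈ BSet ∧ LexLt t a} ∪ {t | t ∈ BSet ∧ ¬ LexLt t a ∧ LexLt t b} := by
    ext t
    constructor
    · rintro ⟨h1, h2⟩
      by_cases h : LexLt t a
      · exact Or.inl ⟨h1, h⟩
      · exact Or.inr ⟨h1, h, h2⟩
    · rintro (⟨h1, h⟩ | ⟨h1, -, h2⟩)
      · refine ⟨h1, ?_⟩
        rcases hab with rfl | hab'
        · exact h
        · exact List.lt_trans h hab'
      · exact ⟨h1, h2⟩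
  have hdisj : Disjoint {t : List ℕ+ | t ∈ BSet ∧ LexLt t a}
      {t : List ℕ+ | t ∈ BSet ∧ ¬ LexLt t a ∧ LexLt t b} :=
    Set.disjoint_left.mpr (fun t ⟨_, h⟩ ⟨_, hn, _⟩ => hn h)
  rw [hset]
  exact Summable.tsum_union_disjoint (f := fun t : List ℕ+ => lam t.length) hdisj
    (summable_sub (fun t ht => ht.1)) (summable_sub (fun t ht => ht.1))

/-! ### Main theorem -/

/-- Let `s, s' ∈ B_n` and let `s''` be a finite sequence such that the concatenations
`s + s''` and `s' + s''` belong to `B`. Then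
`τ (s + s'') - τ (s' + s'') = τ s - τ s'`. -/
theorem tau_append_sub_eq (n : ℕ) (s s' : List ℕ+) (hs : s ∈ BSet) (hs' : s' ∈ BSet)
    (hlen : s.length = n) (hlen' : s'.length = n) (s'' : List ℕ+)
    (h1 : s ++ s'' ∈ BSet) (h2 : s' ++ s'' ∈ BSet) :
    tau (s ++ s'') - tau (s' ++ s'') = tau s - tau s' := by
  set N : Set (List ℕ+) :=
    {u | (∀ i, 1 ≤ i → i ≤ u.length → nthSeq u i ≤ n + i) ∧ LexLt u s''} with hN
  have key : ∀ (v : List ℕ+), v ∈ BSet → v.length = n →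
      tau (v ++ s'') = tau v + ∑' u : ↥N, lam (n + u.1.length) := by
    intro v hv hvlen
    have hab : v = v ++ s'' ∨ LexLt v (v ++ s'') := by
      rcases eq_or_ne s'' [] with rfl | hne
      · exact Or.inl (by simp)
      · exact Or.inr (lex_self_append v hne)
    rw [tau_split hab]
    congr 1
    have himg : {t | t ∈ BSet ∧ ¬ LexLt t v ∧ LexLt t (v ++ s'')} = (v ++ ·) '' N := by
      ext t
      constructor
      · rintro ⟨htB, hna, hlb⟩
        obtain ⟨u, rfl, hu⟩ := lex_sandwich v t s'' hna hlb
        have hcond := (mem_BSet_append hv u).mp htB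
        rw [hvlen] at hcond
        exact ⟨u, ⟨hcond, hu⟩, rfl⟩
      · rintro ⟨u, ⟨hu1, hu2⟩, rfl⟩
        refine ⟨(mem_BSet_append hv u).mpr (by rw [hvlen]; exact hu1), ?_, ?_⟩
        · exact not_lex_append_self v u
        · exact List.Lex.append_left _ hu2 v
    rw [himg]
    have hinj : Set.InjOn (v ++ ·) N := fun x _ y _ h => List.append_cancel_left h
    rw [tsum_image (fun t : List ℕ+ => lam t.length) hinj]
    exact tsum_congr (fun u => by rw [List.length_append, hvlen])
  rw [key s hs hlen, key s' hs' hlen']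
  ring
end
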